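/- Main approximate-reduction theorem: Let X be a smooth complete vector field on ℝⁿ = ℝᵐ × ℝᵏ that is fiberwise practically stable with respect to π_k (with class K∞ function γ and constant c ≥ 0), and suppose the control system F(y, z) = Dπ_m · X(y, z) on ℝᵐ with input z ∈ ℝᵏ is IUBIBSS with gain functions γ₁, γ₂ (class K∞). Define the vector field Y on ℝᵐ by Y(y) = F(y, 0). Then X is approximately π_m-related to Y: for every x ∈ ℝⁿ and t ≥ 0, |π_m(x(t,x)) − y(t, π_m(x))| ≤ γ₂(2 γ(|π_k(x)|)) + γ₂(2c), where the right side is a class K∞ function of |π_k(x)| plus a constant. -/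

import Mathlib

open Filter Set

/-- A class `K∞` function. -/
def ClassKInf (γ : ℝ → ℝ) : Prop :=
  ContinuousOn γ (Set.Ici 0) ∧ StrictMonoOn γ (Set.Ici 0) ∧ γ 0 = 0 ∧
    Tendsto γ atTop atTop

/-- Main approximate-reduction theorem.  `flowX` is the flow of `X` on
`ℝᵐ × ℝᵏ`, `trajF v y t` is the trajectory of the control system
`ẏ = F(y, v(t))` with `F = Dπ_m · X`, and `flowY` is the flow of the reduced
vector field `Y(y) = F(y, 0)`, i.e. the trajectory of `F` with zero input.
Fiberwise practical stability of `X` and IUBIBSS of `F` yield that `X` is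
approximately `π_m`-related to `Y`, with the explicit bound
`γ₂(2 γ(|π_k(x)|)) + γ₂(2 c)`. -/
theorem approximate_reduction (m k : ℕ)
    (flowX : ℝ → EuclideanSpace ℝ (Fin m) × EuclideanSpace ℝ (Fin k) →
      EuclideanSpace ℝ (Fin m) × EuclideanSpace ℝ (Fin k))
    (trajF : (ℝ → EuclideanSpace ℝ (Fin k)) → EuclideanSpace ℝ (Fin m) → ℝ →
      EuclideanSpace ℝ (Fin m))
    (flowY : ℝ → EuclideanSpace ℝ (Fin m) → EuclideanSpace ℝ (Fin m))
    (γ γ₁ γ₂ : ℝ → ℝ) (c : ℝ)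
    (hγ : ClassKInf γ) (hγ₁ : ClassKInf γ₁) (hγ₂ : ClassKInf γ₂) (hc : 0 ≤ c)
    -- fiberwise practical stability of X with respect to π_k
    (hfps : ∀ (x) (t : ℝ), 0 ≤ t → ‖(flowX t x).2‖ ≤ γ ‖x.2‖ + c)
    -- IUBIBSS of the control system F
    (hIUBIBSS : ∀ (v₁ v₂ : ℝ → EuclideanSpace ℝ (Fin k))
      (y₁ y₂ : EuclideanSpace ℝ (Fin m)) (t : ℝ), 0 ≤ t →
      ‖trajF v₁ y₁ t - trajF v₂ y₂ t‖ ≤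
        γ₁ ‖y₁ - y₂‖ + γ₂ (⨆ s : Set.Icc (0:ℝ) t, ‖v₁ s - v₂ s‖))
    -- π_m ∘ flowX is the trajectory of F with input π_k ∘ flowX
    (hlink : ∀ (x) (t : ℝ), (flowX t x).1 = trajF (fun s => (flowX s x).2) x.1 t)
    -- the flow of Y is the trajectory of F with zero input
    (hY : ∀ (y) (t : ℝ), flowY t y = trajF (fun _ => 0) y t) :
    ∀ (x) (t : ℝ), 0 ≤ t →
      ‖(flowX t x).1 - flowY t x.1‖ ≤ γ₂ (2 * γ ‖x.2‖) + γ₂ (2 * c) := by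

  intro x t ht
  have hmono := hγ₂.2.1.monotoneOn
  have hγnn : 0 ≤ γ ‖x.2‖ := by
    have := hγ.2.1.monotoneOn (Set.self_mem_Ici) (Set.mem_Ici.2 (norm_nonneg x.2))
      (norm_nonneg x.2)
    simpa [hγ.2.2.1] using this
  -- the supremum of the input norm
  set S : ℝ := ⨆ s : Set.Icc (0:ℝ) t, ‖(fun s => (flowX s x).2) s - (fun _ => (0:EuclideanSpace ℝ (Fin k))) s‖ with hS
  haveI : Nonempty (Set.Icc (0:ℝ) t) := ⟨⟨0, by simp [ht]⟩⟩
  have hbdd : BddAbove (Set.range fun s : Set.Icc (0:ℝ) t =>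
      ‖(fun s => (flowX s x).2) s - (fun _ => (0:EuclideanSpace ℝ (Fin k))) s‖) := by
    refine ⟨γ ‖x.2‖ + c, ?_⟩
    rintro r ⟨s, rfl⟩
    simpa using hfps x s s.2.1
  have hSle : S ≤ γ ‖x.2‖ + c := by
    refine ciSup_le fun s => ?_
    simpa using hfps x s s.2.1
  have hSnn : 0 ≤ S := le_trans (norm_nonneg _)
    (le_ciSup hbdd (⟨0, by simp [ht]⟩ : Set.Icc (0:ℝ) t))
  have h1 := hIUBIBSS (fun s => (flowX s x).2) (fun _ => 0) x.1 x.1 t ht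
  rw [hlink, hY]
  refine le_trans h1 ?_
  have hγ₁0 : γ₁ ‖x.1 - x.1‖ = 0 := by simp [hγ₁.2.2.1]
  rw [hγ₁0, zero_add]
  have h2 : γ₂ S ≤ γ₂ (γ ‖x.2‖ + c) :=
    hmono (Set.mem_Ici.2 hSnn) (Set.mem_Ici.2 (by linarith)) hSle
  refine le_trans h2 ?_
  have hnn2 : ∀ a : ℝ, 0 ≤ a → 0 ≤ γ₂ a := fun a ha => by
    have := hmono Set.self_mem_Ici (Set.mem_Ici.2 ha) ha
    simpa [hγ₂.2.2.1] using this
  rcases le_total (γ ‖x.2‖) c with h | h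
  · have : γ₂ (γ ‖x.2‖ + c) ≤ γ₂ (2 * c) :=
      hmono (Set.mem_Ici.2 (by linarith)) (Set.mem_Ici.2 (by linarith)) (by linarith)
    linarith [hnn2 (2 * γ ‖x.2‖) (by linarith), this]
  · have h3 : γ₂ (γ ‖x.2‖ + c) ≤ γ₂ (2 * γ ‖x.2‖) :=
      hmono (Set.mem_Ici.2 (by linarith)) (Set.mem_Ici.2 (by linarith)) (by linarith)
    linarith [hnn2 (2 * c) (by linarith), h3]
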